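/- Euler's Pentagonal Number Theorem: ∏_{m=1}^{∞}(1 - q^m) = 1 + ∑_{l=1}^{∞} (-1)^l (q^{l(3l-1)/2} + q^{l(3l+1)/2}) as formal power series. -/

import Mathlib

open Finset

namespace PNT

noncomputable def mx (S : Finset ℕ) : ℕ := S.sup id
noncomputable def mn (S : Finset ℕ) : ℕ := sInf (S : Set ℕ)
noncomputable def rr (S : Finset ℕ) : ℕ := sInf {x : ℕ | x ∈ S ∧ Finset.Icc x (mx S) ⊆ S}

lemma le_mx {S : Finset ℕ} {x : ℕ} (hx : x ∈ S) : x ≤ mx S := Finset.le_sup (f := id) hx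

lemma mx_eq_max' {S : Finset ℕ} (h : S.Nonempty) : mx S = S.max' h := by
  rw [Finset.max', mx, Finset.sup'_eq_sup]

lemma mx_mem {S : Finset ℕ} (h : S.Nonempty) : mx S ∈ S := by
  rw [mx_eq_max' h]; exact S.max'_mem h

lemma mn_le {S : Finset ℕ} {x : ℕ} (hx : x ∈ S) : mn S ≤ x := Nat.sInf_le (by simpa using hx)

lemma mn_mem {S : Finset ℕ} (h : S.Nonempty) : mn S ∈ S := by
  have : (S : Set ℕ).Nonempty := by exact_mod_cast h
  simpa [mn] using Nat.sInf_mem this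

lemma rr_spec {S : Finset ℕ} (h : S.Nonempty) : rr S ∈ S ∧ Finset.Icc (rr S) (mx S) ⊆ S := by
  have hne : {x : ℕ | x ∈ S ∧ Finset.Icc x (mx S) ⊆ S}.Nonempty :=
    ⟨mx S, mx_mem h, by intro y hy; simp only [Finset.mem_Icc] at hy; have : y = mx S := le_antisymm hy.2 hy.1; subst this; exact mx_mem h⟩
  exact Nat.sInf_mem hne

lemma rr_le {S : Finset ℕ} {x : ℕ} (hx : x ∈ S) (hI : Finset.Icc x (mx S) ⊆ S) : rr S ≤ x :=
  Nat.sInf_le ⟨hx, hI⟩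

lemma rr_mem {S : Finset ℕ} (h : S.Nonempty) : rr S ∈ S := (rr_spec h).1
lemma rr_Icc {S : Finset ℕ} (h : S.Nonempty) : Finset.Icc (rr S) (mx S) ⊆ S := (rr_spec h).2
lemma rr_le_mx {S : Finset ℕ} (h : S.Nonempty) : rr S ≤ mx S := le_mx (rr_mem h)
lemma mn_le_rr {S : Finset ℕ} (h : S.Nonempty) : mn S ≤ rr S := mn_le (rr_mem h)

lemma rr_pos {S : Finset ℕ} (h : S.Nonempty) (h0 : 0 ∉ S) : 1 ≤ rr S := by
  rcases Nat.eq_zero_or_pos (rr S) with he | hp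
  · exact absurd (he ▸ rr_mem h) h0
  · exact hp

lemma rr_pred_not_mem {S : Finset ℕ} (h : S.Nonempty) (h0 : 0 ∉ S) : rr S - 1 ∉ S := by
  intro hmem
  have h1 : 1 ≤ rr S := rr_pos h h0
  have : rr S ≤ rr S - 1 := by
    refine rr_le hmem ?_
    intro y hy
    simp only [Finset.mem_Icc] at hy
    rcases eq_or_lt_of_le hy.1 with he | hl
    · exact he ▸ hmem
    · exact rr_Icc h (Finset.mem_Icc.2 ⟨by omega, hy.2⟩)
  omega

/-- every element of S at least rr is in the run -/
lemma S_decomp {S : Finset ℕ} (h : S.Nonempty) :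
    S = S.filter (fun x => x < rr S) ∪ Finset.Icc (rr S) (mx S) := by
  ext x
  simp only [Finset.mem_union, Finset.mem_filter, Finset.mem_Icc]
  constructor
  · intro hx
    rcases lt_or_ge x (rr S) with hl | hg
    · exact Or.inl ⟨hx, hl⟩
    · exact Or.inr ⟨hg, le_mx hx⟩
  · rintro (⟨hx, _⟩ | hx)
    · exact hx
    · exact rr_Icc h (Finset.mem_Icc.2 hx)




lemma mx_Icc {a b : ℕ} (h : a ≤ b) : mx (Finset.Icc a b) = b := by
  apply le_antisymm
  · apply Finset.sup_le; intro x hx; simp only [Finset.mem_Icc] at hx; exact hx.2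
  · exact Finset.le_sup (f := id) (Finset.mem_Icc.2 ⟨h, le_rfl⟩)

lemma mn_Icc {a b : ℕ} (h : a ≤ b) : mn (Finset.Icc a b) = a := by
  have hne : (Finset.Icc a b).Nonempty := ⟨a, Finset.mem_Icc.2 ⟨le_rfl, h⟩⟩
  apply le_antisymm
  · exact mn_le (Finset.mem_Icc.2 ⟨le_rfl, h⟩)
  · have := mn_mem hne; simp only [Finset.mem_Icc] at this; exact this.1

lemma mem_le_sum {S : Finset ℕ} {x : ℕ} (hx : x ∈ S) : x ≤ S.sum id :=
  Finset.single_le_sum (f := id) (fun i _ => Nat.zero_le i) hx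

/-- shifted interval image -/
lemma Icc_image_succ (a b : ℕ) : (Finset.Icc a b).image (· + 1) = Finset.Icc (a+1) (b+1) := by
  ext x
  simp only [Finset.mem_image, Finset.mem_Icc]
  constructor
  · rintro ⟨y, hy, rfl⟩; omega
  · intro hx; exact ⟨x - 1, by omega, by omega⟩

lemma sum_Icc_succ (a b : ℕ) (h : a ≤ b) :
    (Finset.Icc (a+1) (b+1)).sum id = (Finset.Icc a b).sum id + (b + 1 - a) := by
  rw [← Icc_image_succ, Finset.sum_image (by intro x _ y _ h; simp only at h; omega)]
  have : ∑ x ∈ Finset.Icc a b, id (x + 1) = ∑ x ∈ Finset.Icc a b, (id x + 1) := rfl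
  rw [this, Finset.sum_add_distrib, Finset.sum_const, Nat.card_Icc]
  simp [Nat.smul_one_eq_cast]



def IsStair (T : Finset ℕ) : Prop :=
  T = ∅ ∨ ∃ k, 1 ≤ k ∧ (T = Finset.Icc k (2*k-1) ∨ T = Finset.Icc (k+1) (2*k))

noncomputable def fwd (S : Finset ℕ) : Finset ℕ :=
  ((S.erase (mn S)).filter (fun x => x ≤ mx S - mn S)) ∪ Finset.Icc (mx S - mn S + 2) (mx S + 1)

noncomputable def bwd (S : Finset ℕ) : Finset ℕ :=
  (S.filter (fun x => x < rr S)) ∪ Finset.Icc (rr S - 1) (mx S - 1) ∪ {mx S + 1 - rr S}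

noncomputable def phi (S : Finset ℕ) : Finset ℕ :=
  if mn S + rr S ≤ mx S + 1 then fwd S else bwd S

lemma rr_Icc_eq {a b : ℕ} (h : a ≤ b) : rr (Finset.Icc a b) = a := by
  have hne : (Finset.Icc a b).Nonempty := ⟨a, Finset.mem_Icc.2 ⟨le_rfl, h⟩⟩
  apply le_antisymm
  · exact rr_le (Finset.mem_Icc.2 ⟨le_rfl, h⟩) (by rw [mx_Icc h])
  · have := rr_mem hne; simp only [Finset.mem_Icc] at this; exact this.1

lemma mn_pos {S : Finset ℕ} (hne : S.Nonempty) (h0 : 0 ∉ S) : 1 ≤ mn S := by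
  rcases Nat.eq_zero_or_pos (mn S) with he | hp
  · exact absurd (he ▸ mn_mem hne) h0
  · exact hp

lemma S_sub_Icc {S : Finset ℕ} : S ⊆ Finset.Icc (mn S) (mx S) := by
  intro x hx; exact Finset.mem_Icc.2 ⟨mn_le hx, le_mx hx⟩

lemma not_fix_fwd {S : Finset ℕ} (hne : S.Nonempty) (h0 : 0 ∉ S) (hst : ¬ IsStair S)
    (hc : mn S + rr S ≤ mx S + 1) : 2 * mn S ≤ mx S := by
  by_contra hlt
  push_neg at hlt
  have hs1 : 1 ≤ mn S := mn_pos hne h0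
  have hsr : mn S ≤ rr S := mn_le_rr hne
  have hrM : rr S ≤ mx S := rr_le_mx hne
  have hrs : rr S = mn S := by omega
  have hSeq : S = Finset.Icc (mn S) (mx S) :=
    le_antisymm S_sub_Icc (by rw [← hrs]; exact rr_Icc hne)
  have hM : mx S = 2 * mn S - 1 := by
    have : mn S ≤ mx S := le_mx (mn_mem hne)
    omega
  exact hst (Or.inr ⟨mn S, hs1, Or.inl (hSeq.trans (by rw [hM]))⟩)

lemma not_fix_bwd {S : Finset ℕ} (hne : S.Nonempty) (h0 : 0 ∉ S) (hst : ¬ IsStair S)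
    (hc : mx S + 1 < mn S + rr S) : mx S + 3 ≤ 2 * rr S := by
  by_contra hlt
  push_neg at hlt
  have hs1 : 1 ≤ mn S := mn_pos hne h0
  have hsr : mn S ≤ rr S := mn_le_rr hne
  have hrM : rr S ≤ mx S := rr_le_mx hne
  have hrs : rr S = mn S := by omega
  have hSeq : S = Finset.Icc (mn S) (mx S) :=
    le_antisymm S_sub_Icc (by rw [← hrs]; exact rr_Icc hne)
  refine hst (Or.inr ⟨mx S + 1 - rr S, by omega, Or.inr ?_⟩)
  exact hSeq.trans (by congr 1 <;> omega)


lemma fwd_main {S : Finset ℕ} (hne : S.Nonempty) (h0 : 0 ∉ S)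
    (hc : mn S + rr S ≤ mx S + 1) (h2s : 2 * mn S ≤ mx S) :
    0 ∉ fwd S ∧ (fwd S).sum id = S.sum id ∧ S.card = (fwd S).card + 1 ∧
    (fwd S).Nonempty ∧ ¬ IsStair (fwd S) ∧ phi (fwd S) = S := by
  have hs1 : 1 ≤ mn S := mn_pos hne h0
  have hsM : mn S ≤ mx S := le_mx (mn_mem hne)
  have hrM : rr S ≤ mx S := rr_le_mx hne
  have hsr : mn S ≤ rr S := mn_le_rr hne
  set M := mx S with hM
  set s := mn S with hs
  set A := (S.erase s).filter (fun x => x ≤ M - s) with hA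
  set B := Finset.Icc (M - s + 2) (M + 1) with hB
  have hfwd : fwd S = A ∪ B := rfl
  have hrun : Finset.Icc (M - s + 1) M ⊆ S := by
    refine Finset.Subset.trans (Finset.Icc_subset_Icc (by omega) le_rfl) (rr_Icc hne)
  have hAmem : ∀ x, x ∈ A ↔ x ∈ S ∧ s < x ∧ x ≤ M - s := by
    intro x
    simp only [hA, Finset.mem_filter, Finset.mem_erase]
    constructor
    · rintro ⟨⟨hxs, hxS⟩, hxle⟩
      exact ⟨hxS, lt_of_le_of_ne (mn_le hxS) (Ne.symm hxs), hxle⟩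
    · rintro ⟨hxS, hlt, hle⟩; exact ⟨⟨by omega, hxS⟩, hle⟩
  have hBmem : ∀ x, x ∈ B ↔ M - s + 2 ≤ x ∧ x ≤ M + 1 := by
    intro x; simp [hB]
  have hFmem : ∀ x, x ∈ fwd S ↔ (x ∈ S ∧ s < x ∧ x ≤ M - s) ∨ (M - s + 2 ≤ x ∧ x ≤ M + 1) := by
    intro x; rw [hfwd, Finset.mem_union, hAmem, hBmem]
  have hdecomp : S = A ∪ Finset.Icc (M - s + 1) M ∪ {s} := by
    ext x
    simp only [Finset.mem_union, Finset.mem_singleton, Finset.mem_Icc, hAmem]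
    constructor
    · intro hx
      rcases eq_or_lt_of_le (mn_le hx : s ≤ x) with he | hlt
      · exact Or.inr he.symm
      rcases le_or_gt x (M - s) with h1 | h2
      · exact Or.inl (Or.inl ⟨hx, hlt, h1⟩)
      · exact Or.inl (Or.inr ⟨by omega, le_mx hx⟩)
    · rintro ((⟨h, _⟩ | hx) | rfl)
      · exact h
      · exact hrun (Finset.mem_Icc.2 hx)
      · exact mn_mem hne
  have hdisAI : Disjoint A (Finset.Icc (M - s + 1) M) := by
    rw [Finset.disjoint_left]
    intro x hx hx2
    rw [hAmem] at hx
    simp only [Finset.mem_Icc] at hx2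
    omega
  have hdisAB : Disjoint A B := by
    rw [Finset.disjoint_left]
    intro x hx hx2
    rw [hAmem] at hx
    rw [hBmem] at hx2
    omega
  have hdissing : Disjoint (A ∪ Finset.Icc (M - s + 1) M) {s} := by
    rw [Finset.disjoint_right]
    intro x hx hx2
    simp only [Finset.mem_singleton] at hx
    subst hx
    simp only [Finset.mem_union, Finset.mem_Icc, hAmem] at hx2
    omega
  -- cards
  have hcard : S.card = (fwd S).card + 1 := by
    rw [hfwd, Finset.card_union_of_disjoint hdisAB]
    conv_lhs => rw [hdecomp]
    rw [Finset.card_union_of_disjoint hdissing, Finset.card_union_of_disjoint hdisAI]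
    simp only [Nat.card_Icc, Finset.card_singleton, hB]
    omega
  -- sums
  have hsum : (fwd S).sum id = S.sum id := by
    rw [hfwd, Finset.sum_union hdisAB]
    conv_rhs => rw [hdecomp]
    rw [Finset.sum_union hdissing, Finset.sum_union hdisAI]
    have hBsum : B.sum id = (Finset.Icc (M - s + 1) M).sum id + s := by
      rw [hB, show M - s + 2 = (M - s + 1) + 1 from by omega,
        show M + 1 = M + 1 from rfl, sum_Icc_succ (M - s + 1) M (by omega)]
      omega
    rw [hBsum]
    simp only [Finset.sum_singleton, id]
    omega
  have h0f : 0 ∉ fwd S := by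
    rw [hFmem]
    push_neg
    constructor
    · intro h; omega
    · intro h; omega
  have hnef : (fwd S).Nonempty := ⟨M + 1, by rw [hFmem]; right; omega⟩
  have hmxf : mx (fwd S) = M + 1 := by
    apply le_antisymm
    · apply Finset.sup_le
      intro x hx
      rw [hFmem] at hx
      simp only [id]
      omega
    · exact le_mx (by rw [hFmem]; right; omega)
  have hmnf : s + 1 ≤ mn (fwd S) := by
    have := mn_mem hnef
    rw [hFmem] at this
    omega
  have hrrf : rr (fwd S) = M - s + 2 := by
    apply le_antisymm
    · refine rr_le (by rw [hFmem]; right; omega) ?_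
      rw [hmxf]
      intro y hy
      rw [hFmem]
      simp only [Finset.mem_Icc] at hy
      right; omega
    · by_contra hlt
      push_neg at hlt
      have h1 : M - s + 1 ∈ Finset.Icc (rr (fwd S)) (mx (fwd S)) := by
        rw [hmxf]
        simp only [Finset.mem_Icc]
        omega
      have h2 := rr_Icc hnef h1
      rw [hFmem] at h2
      omega
  refine ⟨h0f, hsum, hcard, hnef, ?_, ?_⟩
  · -- not stair
    rintro (hemp | ⟨k, hk, hcase | hcase⟩)
    · exact hnef.ne_empty hemp
    · have e1 : mx (fwd S) = 2 * k - 1 := by rw [hcase, mx_Icc (by omega)]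
      have e2 : rr (fwd S) = k := by rw [hcase, rr_Icc_eq (by omega)]
      omega
    · have e1 : mx (fwd S) = 2 * k := by rw [hcase, mx_Icc (by omega)]
      have e2 : rr (fwd S) = k + 1 := by rw [hcase, rr_Icc_eq (by omega)]
      omega
  · -- phi (fwd S) = S
    have hcond : ¬ (mn (fwd S) + rr (fwd S) ≤ mx (fwd S) + 1) := by omega
    rw [phi, if_neg hcond, bwd, hrrf, hmxf]
    have e1 : M + 1 + 1 - (M - s + 2) = s := by omega
    have e2 : M - s + 2 - 1 = M - s + 1 := by omega
    have e3 : M + 1 - 1 = M := by omega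
    rw [e1, e2, e3]
    have e4 : (fwd S).filter (fun x => x < M - s + 2) = A := by
      ext x
      simp only [Finset.mem_filter, hAmem]
      rw [hFmem]
      constructor
      · rintro ⟨h1 | h1, h2⟩
        · exact h1
        · omega
      · intro h; exact ⟨Or.inl h, by omega⟩
    rw [e4]
    exact hdecomp.symm


lemma bwd_main {S : Finset ℕ} (hne : S.Nonempty) (h0 : 0 ∉ S)
    (hc : mx S + 1 < mn S + rr S) (h2r : mx S + 3 ≤ 2 * rr S) :
    0 ∉ bwd S ∧ (bwd S).sum id = S.sum id ∧ (bwd S).card = S.card + 1 ∧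
    (bwd S).Nonempty ∧ ¬ IsStair (bwd S) ∧ phi (bwd S) = S := by
  have hs1 : 1 ≤ mn S := mn_pos hne h0
  have hsM : mn S ≤ mx S := le_mx (mn_mem hne)
  have hrM : rr S ≤ mx S := rr_le_mx hne
  have hsr : mn S ≤ rr S := mn_le_rr hne
  have hprednot : rr S - 1 ∉ S := rr_pred_not_mem hne h0
  set M := mx S with hM
  set s := mn S with hs
  set r := rr S with hr0
  set t := M + 1 - r with ht
  set A := S.filter (fun x => x < r) with hA
  set B := Finset.Icc (r - 1) (M - 1) with hB
  have hbwd : bwd S = A ∪ B ∪ {t} := rfl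
  have hAmem : ∀ x, x ∈ A ↔ x ∈ S ∧ x ≤ r - 2 := by
    intro x
    simp only [hA, Finset.mem_filter]
    constructor
    · rintro ⟨hxS, hlt⟩
      have hx1 : x ≠ r - 1 := fun h => hprednot (h ▸ hxS)
      exact ⟨hxS, by omega⟩
    · rintro ⟨hxS, h2⟩; exact ⟨hxS, by omega⟩
  have hdecomp : S = A ∪ Finset.Icc r M := S_decomp hne
  have hBWmem : ∀ x, x ∈ bwd S ↔ (x ∈ S ∧ x ≤ r - 2) ∨ (r - 1 ≤ x ∧ x ≤ M - 1) ∨ x = t := by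
    intro x
    rw [hbwd]
    simp only [Finset.mem_union, Finset.mem_singleton, hB, Finset.mem_Icc, hAmem]
    tauto
  have hdisAB : Disjoint A B := by
    rw [Finset.disjoint_left]
    intro x hx hx2
    rw [hAmem] at hx
    simp only [hB, Finset.mem_Icc] at hx2
    omega
  have hdissing : Disjoint (A ∪ B) {t} := by
    rw [Finset.disjoint_right]
    intro x hx hx2
    simp only [Finset.mem_singleton] at hx
    subst hx
    simp only [Finset.mem_union, hB, Finset.mem_Icc, hAmem] at hx2
    rcases hx2 with ⟨hxS, h2⟩ | ⟨h1, h2⟩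
    · have := mn_le hxS; omega
    · omega
  have hdisAI : Disjoint A (Finset.Icc r M) := by
    rw [Finset.disjoint_left]
    intro x hx hx2
    rw [hAmem] at hx
    simp only [Finset.mem_Icc] at hx2
    omega
  have hcard : (bwd S).card = S.card + 1 := by
    rw [hbwd, Finset.card_union_of_disjoint hdissing, Finset.card_union_of_disjoint hdisAB]
    conv_rhs => rw [hdecomp]
    rw [Finset.card_union_of_disjoint hdisAI]
    simp only [Nat.card_Icc, Finset.card_singleton, hB]
    omega
  have hsum : (bwd S).sum id = S.sum id := by
    rw [hbwd, Finset.sum_union hdissing, Finset.sum_union hdisAB]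
    conv_rhs => rw [hdecomp]
    rw [Finset.sum_union hdisAI]
    have hIsum : (Finset.Icc r M).sum id = B.sum id + t := by
      rw [hB, show r = (r - 1) + 1 from by omega, show M = (M - 1) + 1 from by omega,
        sum_Icc_succ (r - 1) (M - 1) (by omega)]
      have : (r-1) + 1 - 1 = r - 1 := by omega
      rw [show (r-1)+1-1 = r-1 from by omega, show (M-1)+1-1 = M-1 from by omega]
      omega
    rw [hIsum]
    simp only [Finset.sum_singleton, id]
    omega
  have h0b : 0 ∉ bwd S := by
    rw [hBWmem]
    push_neg
    refine ⟨fun h => absurd h h0, fun h => by omega, by omega⟩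
  have hneb : (bwd S).Nonempty := ⟨t, by rw [hBWmem]; tauto⟩
  have hmxb : mx (bwd S) = M - 1 := by
    apply le_antisymm
    · apply Finset.sup_le
      intro x hx
      rw [hBWmem] at hx
      have hxM : x ∈ S → x ≤ M := le_mx
      simp only [id]
      rcases hx with ⟨h1, h3⟩ | ⟨h1, h2⟩ | rfl
      · have := hxM h1; omega
      · omega
      · omega
    · exact le_mx (by rw [hBWmem]; right; left; omega)
  have hmnb : mn (bwd S) = t := by
    apply le_antisymm
    · exact mn_le (by rw [hBWmem]; tauto)
    · have := mn_mem hneb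
      rw [hBWmem] at this
      rcases this with ⟨h1, h3⟩ | ⟨h1, h2⟩ | he
      · have := mn_le h1; omega
      · omega
      · omega
  have hrrb : rr (bwd S) ≤ r - 1 := by
    refine rr_le (by rw [hBWmem]; right; left; omega) ?_
    rw [hmxb]
    intro y hy
    rw [hBWmem]
    simp only [Finset.mem_Icc] at hy
    right; left; omega
  refine ⟨h0b, hsum, hcard, hneb, ?_, ?_⟩
  · rintro (hemp | ⟨k, hk, hcase | hcase⟩)
    · exact hneb.ne_empty hemp
    · have e1 : mx (bwd S) = 2 * k - 1 := by rw [hcase, mx_Icc (by omega)]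
      have e2 : mn (bwd S) = k := by rw [hcase, mn_Icc (by omega)]
      omega
    · have e1 : mx (bwd S) = 2 * k := by rw [hcase, mx_Icc (by omega)]
      have e2 : mn (bwd S) = k + 1 := by rw [hcase, mn_Icc (by omega)]
      omega
  · have hcond : mn (bwd S) + rr (bwd S) ≤ mx (bwd S) + 1 := by omega
    rw [phi, if_pos hcond, fwd, hmnb, hmxb]
    have e2 : M - 1 - t = r - 2 := by omega
    have e3 : r - 2 + 2 = r := by omega
    have e4 : M - 1 + 1 = M := by omega
    rw [e2, e3, e4]
    have e5 : ((bwd S).erase t).filter (fun x => x ≤ r - 2) = A := by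
      ext x
      simp only [Finset.mem_filter, Finset.mem_erase, hAmem]
      rw [hBWmem]
      constructor
      · rintro ⟨⟨hne2, h1 | h1 | h1⟩, h2⟩
        · exact h1
        · omega
        · omega
      · rintro ⟨hxS, h2⟩
        have := mn_le hxS
        exact ⟨⟨by omega, Or.inl ⟨hxS, h2⟩⟩, h2⟩
    rw [e5]
    exact hdecomp.symm



lemma phi_all {S : Finset ℕ} (hne : S.Nonempty) (h0 : 0 ∉ S) (hst : ¬ IsStair S) :
    0 ∉ phi S ∧ (phi S).sum id = S.sum id ∧
    ((phi S).card = S.card + 1 ∨ S.card = (phi S).card + 1) ∧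
    ¬ IsStair (phi S) ∧ phi (phi S) = S ∧ (phi S).Nonempty := by
  by_cases hc : mn S + rr S ≤ mx S + 1
  · have h2s := not_fix_fwd hne h0 hst hc
    obtain ⟨a, b, c, d, e, f⟩ := fwd_main hne h0 hc h2s
    have hp : phi S = fwd S := if_pos hc
    rw [hp]
    exact ⟨a, b, Or.inr c, e, f, d⟩
  · push_neg at hc
    have h2r := not_fix_bwd hne h0 hst hc
    obtain ⟨a, b, c, d, e, f⟩ := bwd_main hne h0 hc h2r
    have hp : phi S = bwd S := if_neg (by omega)
    rw [hp]
    exact ⟨a, b, Or.inl c, e, f, d⟩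

def Q (n : ℕ) : Finset (Finset ℕ) :=
  ((Finset.range (n+1)).powerset).filter (fun S => 0 ∉ S ∧ S.sum id = n)

lemma mem_Q {n : ℕ} {S : Finset ℕ} : S ∈ Q n ↔ 0 ∉ S ∧ S.sum id = n := by
  simp only [Q, Finset.mem_filter, Finset.mem_powerset]
  constructor
  · rintro ⟨h1, h2⟩; exact h2
  · rintro ⟨h1, h2⟩
    refine ⟨fun x hx => Finset.mem_range.2 ?_, h1, h2⟩
    have := mem_le_sum hx
    omega

open Classical in
lemma sum_nonstair (n : ℕ) :
    ∑ S ∈ (Q n).filter (fun S => ¬ IsStair S), (-1 : ℤ)^S.card = 0 := by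
  apply Finset.sum_involution (g := fun S _ => phi S)
  · intro S hS
    simp only [Finset.mem_filter] at hS
    obtain ⟨hQ, hst⟩ := hS
    rw [mem_Q] at hQ
    have hne : S.Nonempty := Finset.nonempty_of_ne_empty (fun h => hst (Or.inl h))
    obtain ⟨_, _, hcard, _, _, _⟩ := phi_all hne hQ.1 hst
    rcases hcard with h | h <;> rw [h, pow_succ] <;> ring
  · intro S hS _
    simp only [Finset.mem_filter] at hS
    obtain ⟨hQ, hst⟩ := hS
    rw [mem_Q] at hQ
    have hne : S.Nonempty := Finset.nonempty_of_ne_empty (fun h => hst (Or.inl h))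
    obtain ⟨_, _, hcard, _, _, _⟩ := phi_all hne hQ.1 hst
    intro heq
    rw [heq] at hcard
    omega
  · intro S hS
    simp only [Finset.mem_filter] at hS ⊢
    obtain ⟨hQ, hst⟩ := hS
    rw [mem_Q] at hQ
    have hne : S.Nonempty := Finset.nonempty_of_ne_empty (fun h => hst (Or.inl h))
    obtain ⟨h0, hsum, _, hst2, _, _⟩ := phi_all hne hQ.1 hst
    exact ⟨mem_Q.2 ⟨h0, by rw [hsum, hQ.2]⟩, hst2⟩
  · intro S hS
    simp only [Finset.mem_filter] at hS
    obtain ⟨hQ, hst⟩ := hS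
    rw [mem_Q] at hQ
    have hne : S.Nonempty := Finset.nonempty_of_ne_empty (fun h => hst (Or.inl h))
    obtain ⟨_, _, _, _, hinv, _⟩ := phi_all hne hQ.1 hst
    exact hinv



lemma sum_Icc_two (a b : ℕ) : (Finset.Icc a b).sum id * 2 + a*(a-1) = (b+1)*b ∨ b + 1 < a := by
  rcases le_or_gt a (b+1) with h | h
  · left
    have hIcc : Finset.Icc a b = Finset.range (b+1) \ Finset.range a := by
      ext x; simp only [Finset.mem_Icc, Finset.mem_sdiff, Finset.mem_range]; omega
    have hsub : Finset.range a ⊆ Finset.range (b+1) := by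
      intro x; simp only [Finset.mem_range]; omega
    have := Finset.sum_sdiff (f := id) hsub
    rw [← hIcc] at this
    have h1 := Finset.sum_range_id_mul_two (b+1)
    have h2 := Finset.sum_range_id_mul_two a
    simp only [id] at this h1 h2 ⊢
    have e1 : b + 1 - 1 = b := by omega
    rw [e1] at h1
    omega
  · right; omega

lemma sum_stair1 (l : ℕ) : (Finset.Icc (l+1) (2*l+1)).sum id = (l+1) * (3*(l+1)-1) / 2 := by
  rcases sum_Icc_two (l+1) (2*l+1) with h | h
  · rw [show 3*(l+1)-1 = 3*l+2 from by omega]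
    simp only [Nat.add_sub_cancel] at h
    have e : (2*l+1+1)*(2*l+1) = (l+1)*l + (l+1)*(3*l+2) := by ring
    omega
  · omega

lemma sum_stair2 (l : ℕ) : (Finset.Icc (l+2) (2*l+2)).sum id = (l+1) * (3*(l+1)+1) / 2 := by
  rcases sum_Icc_two (l+2) (2*l+2) with h | h
  · rw [show 3*(l+1)+1 = 3*l+4 from by omega]
    rw [show l+2-1 = l+1 from rfl] at h
    have e : (2*l+2+1)*(2*l+2) = (l+2)*(l+1) + (l+1)*(3*l+4) := by ring
    omega
  · omega

open Classical in
lemma stair_filter (n : ℕ) :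
    (Q n).filter IsStair =
      ((if n = 0 then ({∅} : Finset (Finset ℕ)) else ∅)
        ∪ ((Finset.range (n+1)).filter (fun l => (Finset.Icc (l+1) (2*l+1)).sum id = n)).image
            (fun l => Finset.Icc (l+1) (2*l+1)))
        ∪ ((Finset.range (n+1)).filter (fun l => (Finset.Icc (l+2) (2*l+2)).sum id = n)).image
            (fun l => Finset.Icc (l+2) (2*l+2)) := by
  ext S
  simp only [Finset.mem_filter, Finset.mem_union, Finset.mem_image, Finset.mem_range, mem_Q]
  constructor
  · rintro ⟨⟨h0, hsum⟩, hemp | ⟨k, hk, hcase | hcase⟩⟩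
    · left; left
      subst hemp
      simp only [Finset.sum_empty] at hsum
      rw [← hsum, if_pos rfl]
      exact Finset.mem_singleton_self ∅
    · left; right
      have hkS : k ∈ S := by rw [hcase]; simp only [Finset.mem_Icc]; omega
      have hkn := hsum ▸ mem_le_sum hkS
      have e : Finset.Icc (k-1+1) (2*(k-1)+1) = S := by
        rw [hcase]; congr 1 <;> omega
      exact ⟨k-1, ⟨by omega, by rw [e]; exact hsum⟩, e⟩
    · right
      have hkS : k + 1 ∈ S := by rw [hcase]; simp only [Finset.mem_Icc]; omega
      have hkn := hsum ▸ mem_le_sum hkS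
      have e : Finset.Icc (k-1+2) (2*(k-1)+2) = S := by
        rw [hcase]; congr 1 <;> omega
      exact ⟨k-1, ⟨by omega, by rw [e]; exact hsum⟩, e⟩
  · rintro ((h | ⟨l, ⟨hl, hsum⟩, rfl⟩) | ⟨l, ⟨hl, hsum⟩, rfl⟩)
    · rcases eq_or_ne n 0 with rfl | hn
      · rw [if_pos rfl, Finset.mem_singleton] at h
        subst h
        exact ⟨⟨by simp, by simp⟩, Or.inl rfl⟩
      · rw [if_neg hn] at h
        simp at h
    · refine ⟨⟨?_, hsum⟩, Or.inr ⟨l+1, by omega, Or.inl ?_⟩⟩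
      · simp only [Finset.mem_Icc]; omega
      · congr 1 <;> omega
    · refine ⟨⟨?_, hsum⟩, Or.inr ⟨l+1, by omega, Or.inr ?_⟩⟩
      · simp only [Finset.mem_Icc]; omega
      · congr 1 <;> omega

open Classical in
lemma sum_stair (n : ℕ) :
    ∑ S ∈ (Q n).filter IsStair, (-1:ℤ)^S.card
      = (if n = 0 then 1 else 0)
        + ∑ l ∈ Finset.range (n+1), (-1:ℤ)^(l+1) *
            ((if (Finset.Icc (l+1) (2*l+1)).sum id = n then 1 else 0)
              + (if (Finset.Icc (l+2) (2*l+2)).sum id = n then 1 else 0)) := by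
  rw [stair_filter]
  have hdis1 : Disjoint
      ((if n = 0 then ({∅} : Finset (Finset ℕ)) else ∅)
        ∪ ((Finset.range (n+1)).filter (fun l => (Finset.Icc (l+1) (2*l+1)).sum id = n)).image
            (fun l => Finset.Icc (l+1) (2*l+1)))
      (((Finset.range (n+1)).filter (fun l => (Finset.Icc (l+2) (2*l+2)).sum id = n)).image
            (fun l => Finset.Icc (l+2) (2*l+2))) := by
    rw [Finset.disjoint_right]
    intro S hS hS2
    simp only [Finset.mem_image, Finset.mem_union, Finset.mem_filter] at hS hS2
    obtain ⟨l, _, rfl⟩ := hS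
    rcases hS2 with h | ⟨m, _, heq⟩
    · rcases eq_or_ne n 0 with rfl | hn
      · rw [if_pos rfl, Finset.mem_singleton] at h
        have : l + 2 ∈ (∅ : Finset ℕ) := h ▸ (Finset.mem_Icc.2 (by omega))
        simp at this
      · rw [if_neg hn] at h
        simp at h
    · have e1 : mn (Finset.Icc (m+1) (2*m+1)) = m + 1 := mn_Icc (by omega)
      have e2 : mn (Finset.Icc (l+2) (2*l+2)) = l + 2 := mn_Icc (by omega)
      have e3 : mx (Finset.Icc (m+1) (2*m+1)) = 2*m+1 := mx_Icc (by omega)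
      have e4 : mx (Finset.Icc (l+2) (2*l+2)) = 2*l+2 := mx_Icc (by omega)
      rw [heq] at e1 e3
      omega
  have hdis0 : Disjoint (if n = 0 then ({∅} : Finset (Finset ℕ)) else ∅)
      (((Finset.range (n+1)).filter (fun l => (Finset.Icc (l+1) (2*l+1)).sum id = n)).image
            (fun l => Finset.Icc (l+1) (2*l+1))) := by
    rw [Finset.disjoint_left]
    intro S hS hS2
    simp only [Finset.mem_image, Finset.mem_filter] at hS2
    obtain ⟨l, _, heq⟩ := hS2
    rcases eq_or_ne n 0 with rfl | hn
    · rw [if_pos rfl, Finset.mem_singleton] at hS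
      subst hS
      have : l + 1 ∈ (∅ : Finset ℕ) := heq ▸ (Finset.mem_Icc.2 (by omega))
      simp at this
    · rw [if_neg hn] at hS
      simp at hS
  rw [Finset.sum_union hdis1, Finset.sum_union hdis0]
  have inj1 : ∀ x ∈ (Finset.range (n+1)).filter (fun l => (Finset.Icc (l+1) (2*l+1)).sum id = n),
      ∀ y ∈ (Finset.range (n+1)).filter (fun l => (Finset.Icc (l+1) (2*l+1)).sum id = n),
      Finset.Icc (x+1) (2*x+1) = Finset.Icc (y+1) (2*y+1) → x = y := by
    intro x _ y _ h
    have e1 : mn (Finset.Icc (x+1) (2*x+1)) = x + 1 := mn_Icc (by omega)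
    have e2 : mn (Finset.Icc (y+1) (2*y+1)) = y + 1 := mn_Icc (by omega)
    rw [h] at e1
    omega
  have inj2 : ∀ x ∈ (Finset.range (n+1)).filter (fun l => (Finset.Icc (l+2) (2*l+2)).sum id = n),
      ∀ y ∈ (Finset.range (n+1)).filter (fun l => (Finset.Icc (l+2) (2*l+2)).sum id = n),
      Finset.Icc (x+2) (2*x+2) = Finset.Icc (y+2) (2*y+2) → x = y := by
    intro x _ y _ h
    have e1 : mn (Finset.Icc (x+2) (2*x+2)) = x + 2 := mn_Icc (by omega)
    have e2 : mn (Finset.Icc (y+2) (2*y+2)) = y + 2 := mn_Icc (by omega)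
    rw [h] at e1
    omega
  rw [Finset.sum_image inj1, Finset.sum_image inj2]
  have c1 : ∀ l : ℕ, (Finset.Icc (l+1) (2*l+1)).card = l + 1 := by
    intro l; rw [Nat.card_Icc]; omega
  have c2 : ∀ l : ℕ, (Finset.Icc (l+2) (2*l+2)).card = l + 1 := by
    intro l; rw [Nat.card_Icc]; omega
  have h0 : (∑ S ∈ (if n = 0 then ({∅} : Finset (Finset ℕ)) else ∅), (-1:ℤ)^S.card)
      = (if n = 0 then 1 else 0) := by
    rcases eq_or_ne n 0 with rfl | hn
    · rw [if_pos rfl, if_pos rfl]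
      simp
    · rw [if_neg hn, if_neg hn]
      simp
  rw [h0]
  simp only [c1, c2, mul_add, Finset.sum_add_distrib, mul_ite, mul_one, mul_zero]
  rw [← Finset.sum_filter, ← Finset.sum_filter]
  ring



open PowerSeries in
lemma coeff_lhs (n : ℕ) :
    (PowerSeries.coeff (R := ℤ) n) (∏ m ∈ Finset.range (n + 1), (1 - (X : PowerSeries ℤ) ^ (m + 1))) =
    ∑ S ∈ Q n, (-1:ℤ)^S.card := by
  have step1 : (∏ m ∈ Finset.range (n + 1), (1 - (X : PowerSeries ℤ) ^ (m + 1)))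
      = ∑ t ∈ (Finset.range (n+1)).powerset,
          (C (R := ℤ) ((-1)^t.card)) * X ^ (∑ i ∈ t, (i+1)) := by
    have := Finset.prod_add (fun i => -(X : PowerSeries ℤ)^(i+1)) (fun _ => (1 : PowerSeries ℤ))
      (Finset.range (n+1))
    simp only [Finset.prod_const_one, mul_one] at this
    have e : ∀ m, (1 - (X : PowerSeries ℤ) ^ (m + 1)) = -(X : PowerSeries ℤ)^(m+1) + 1 := by
      intro m; ring
    rw [Finset.prod_congr rfl (fun m _ => e m), this]
    apply Finset.sum_congr rfl
    intro t _
    rw [show (fun i => -(X : PowerSeries ℤ)^(i+1)) = (fun i => (-1 : PowerSeries ℤ) * (X : PowerSeries ℤ)^(i+1)) from by funext i; ring]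
    rw [Finset.prod_mul_distrib, Finset.prod_const, Finset.prod_pow_eq_pow_sum]
    have : ((-1 : PowerSeries ℤ))^t.card = C (R := ℤ) ((-1)^t.card) := by
      rw [map_pow, map_neg, map_one]
    rw [this]
  rw [step1, map_sum]
  have step2 : ∀ t ∈ (Finset.range (n+1)).powerset,
      (PowerSeries.coeff (R := ℤ) n) ((C (R := ℤ) ((-1)^t.card)) * X ^ (∑ i ∈ t, (i+1)))
      = (-1:ℤ)^t.card * (if (∑ i ∈ t, (i+1)) = n then 1 else 0) := by
    intro t _
    rw [PowerSeries.coeff_C_mul, PowerSeries.coeff_X_pow]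
    congr 1
    simp [eq_comm]
  rw [Finset.sum_congr rfl step2]
  simp only [mul_ite, mul_one, mul_zero]
  rw [← Finset.sum_filter]
  apply Finset.sum_nbij' (i := fun t => t.image (· + 1)) (j := fun S => S.image (· - 1))
  · intro t ht
    simp only [Finset.mem_filter, Finset.mem_powerset] at ht
    rw [mem_Q]
    constructor
    · simp only [Finset.mem_image]
      rintro ⟨x, _, h⟩
      omega
    · rw [Finset.sum_image (by intro x _ y _ h; simp only at h; omega)]
      simpa using ht.2
  · intro S hS
    rw [mem_Q] at hS
    simp only [Finset.mem_filter, Finset.mem_powerset]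
    have hpos : ∀ x ∈ S, 1 ≤ x := by
      intro x hx
      rcases Nat.eq_zero_or_pos x with rfl | h
      · exact absurd hx hS.1
      · exact h
    constructor
    · intro y hy
      simp only [Finset.mem_image] at hy
      obtain ⟨x, hx, rfl⟩ := hy
      have h1 := mem_le_sum hx
      rw [hS.2] at h1
      simp only [Finset.mem_range]
      omega
    · rw [Finset.sum_image (by intro x hx y hy h; have := hpos x hx; have := hpos y hy; simp only at h; omega)]
      rw [← hS.2]
      apply Finset.sum_congr rfl
      intro x hx
      have := hpos x hx
      simp only [id]
      omega
  · intro t ht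
    simp only [Finset.image_image]
    have : ∀ x ∈ t, ((· - 1) ∘ (· + 1)) x = id x := by intro x _; simp
    rw [Finset.image_congr (fun x hx => this x hx), Finset.image_id]
  · intro S hS
    rw [mem_Q] at hS
    have hpos : ∀ x ∈ S, 1 ≤ x := by
      intro x hx
      rcases Nat.eq_zero_or_pos x with rfl | h
      · exact absurd hx hS.1
      · exact h
    simp only [Finset.image_image]
    have : ∀ x ∈ S, ((· + 1) ∘ (· - 1)) x = id x := by
      intro x hx
      have := hpos x hx
      simp only [Function.comp_apply, id]
      omega
    rw [Finset.image_congr (fun x hx => this x hx), Finset.image_id]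
  · intro t ht
    rw [Finset.card_image_of_injective _ (add_left_injective 1)]


open PowerSeries in
lemma coeff_rhs (n : ℕ) :
    (PowerSeries.coeff (R := ℤ) n) (1 + ∑ l ∈ Finset.range (n + 1),
        ((-1 : PowerSeries ℤ) ^ (l + 1) *
          ((X : PowerSeries ℤ) ^ ((l + 1) * (3 * (l + 1) - 1) / 2) +
           (X : PowerSeries ℤ) ^ ((l + 1) * (3 * (l + 1) + 1) / 2))))
    = (if n = 0 then 1 else 0)
        + ∑ l ∈ Finset.range (n+1), (-1:ℤ)^(l+1) *
            ((if (Finset.Icc (l+1) (2*l+1)).sum id = n then 1 else 0)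
              + (if (Finset.Icc (l+2) (2*l+2)).sum id = n then 1 else 0)) := by
  rw [map_add, map_sum, PowerSeries.coeff_one]
  congr 1
  apply Finset.sum_congr rfl
  intro l _
  have e : ((-1 : PowerSeries ℤ))^(l+1) = C (R := ℤ) ((-1)^(l+1)) := by
    rw [map_pow, map_neg, map_one]
  rw [e, PowerSeries.coeff_C_mul, map_add, PowerSeries.coeff_X_pow, PowerSeries.coeff_X_pow,
    ← sum_stair1, ← sum_stair2]
  congr 2 <;> simp [eq_comm]

end PNT

open PowerSeries Finset

/-- Euler's Pentagonal Number Theorem: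
`∏_{m=1}^∞ (1 - q^m) = 1 + ∑_{l=1}^∞ (-1)^l (q^{l(3l-1)/2} + q^{l(3l+1)/2})`,
stated coefficientwise (truncating the product and the sum, which does not affect
the coefficient of `q^n`). -/
theorem pentagonal_number_theorem :
    ∀ n : ℕ,
      (PowerSeries.coeff (R := ℤ) n) (∏ m ∈ Finset.range (n + 1), (1 - (X : PowerSeries ℤ) ^ (m + 1))) =
      (PowerSeries.coeff (R := ℤ) n) (1 + ∑ l ∈ Finset.range (n + 1),
        ((-1 : PowerSeries ℤ) ^ (l + 1) *
          ((X : PowerSeries ℤ) ^ ((l + 1) * (3 * (l + 1) - 1) / 2) +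
           (X : PowerSeries ℤ) ^ ((l + 1) * (3 * (l + 1) + 1) / 2)))) := by
  intro n
  rw [PNT.coeff_lhs, PNT.coeff_rhs]
  classical
  rw [← Finset.sum_filter_add_sum_filter_not (PNT.Q n) PNT.IsStair]
  rw [PNT.sum_stair, PNT.sum_nonstair]
  ring
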